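/- arXiv:2104.13851 — 2 statements merged into one kernel-verified Lean document; each statement's English description precedes it below -/
import Mathlib

section
/- Let S be a finite nonempty set of sites in a metric space, k > 0 with k ≤ |S|, and for a finite nonempty set C′ define radius C′ = Max {distance C′ s | s ∈ S} where distance C′ s = Min {dist s c | c ∈ C′}. Suppose C satisfies the invariant: C ≠ ∅, |C| ≤ k, C ⊆ S, and for every finite nonempty C′, either 2·radius C′ < dist c₁ c₂ for all distinct c₁, c₂ ∈ C, or distance C s ≤ 2·radius C′ for all s ∈ S. If additionally k ≤ |C|, then |C| = k and every finite C′ with 0 < |C′| ≤ k satisfies radius C ≤ 2·radius C′. -/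
/-- The distance from a point `s` to the nearest center in `C`
(the minimum of `dist s c` over `c ∈ C`, for `C` finite and nonempty). -/
noncomputable def distanceTo {α : Type*} [MetricSpace α] (C : Set α) (s : α) : ℝ :=
  sInf ((fun c => dist s c) '' C)

/-- The radius of a set of centers `C'` w.r.t. the sites `S`
(the maximum over `s ∈ S` of the distance from `s` to `C'`). -/
noncomputable def radius {α : Type*} [MetricSpace α] (S C' : Set α) : ℝ :=
  sSup ((fun s => distanceTo C' s) '' S)

/-- The loop invariant of the greedy center selection algorithm. -/
def invar {α : Type*} [MetricSpace α] (S : Set α) (k : ℕ) (C : Set α) : Prop :=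
  C ≠ ∅ ∧ C.ncard ≤ k ∧ C ⊆ S ∧
    ∀ C' : Set α, C'.Finite → C' ≠ ∅ →
      ((∀ c₁ ∈ C, ∀ c₂ ∈ C, c₁ ≠ c₂ → 2 * radius S C' < dist c₁ c₂) ∨
       (∀ s ∈ S, distanceTo C s ≤ 2 * radius S C'))

/-- The infimum defining `distanceTo` is attained for finite nonempty `C`. -/
lemma distanceTo_attained {α : Type*} [MetricSpace α] {C : Set α}
    (hfin : C.Finite) (hne : C.Nonempty) (s : α) :
    ∃ c ∈ C, distanceTo C s = dist s c := by
  have hT : ((fun c => dist s c) '' C).Finite := hfin.image _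
  have hTne : ((fun c => dist s c) '' C).Nonempty := hne.image _
  have := hTne.csInf_mem hT
  obtain ⟨c, hc, hceq⟩ := this
  exact ⟨c, hc, hceq.symm⟩

lemma distanceTo_le {α : Type*} [MetricSpace α] {C : Set α}
    (hfin : C.Finite) {c : α} (hc : c ∈ C) (s : α) :
    distanceTo C s ≤ dist s c :=
  csInf_le (hfin.image _).bddBelow ⟨c, hc, rfl⟩

lemma distanceTo_le_radius {α : Type*} [MetricSpace α] {S : Set α}
    (hSfin : S.Finite) (C' : Set α) {s : α} (hs : s ∈ S) :
    distanceTo C' s ≤ radius S C' :=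
  le_csSup (hSfin.image _).bddAbove ⟨s, hs, rfl⟩

theorem stmt_15 {α : Type*} [MetricSpace α] (S : Set α)
    (hSfin : S.Finite) (hSne : S.Nonempty)
    (k : ℕ) (hk : 0 < k) (hkS : k ≤ S.ncard)
    (C : Set α) (hinv : invar S k C) (hkC : k ≤ C.ncard) :
    C.ncard = k ∧
      ∀ C' : Set α, C'.Finite → 0 < C'.ncard → C'.ncard ≤ k →
        radius S C ≤ 2 * radius S C' := by
  obtain ⟨hCne, hCk, hCsub, hinv4⟩ := hinv
  have hCfin : C.Finite := hSfin.subset hCsub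
  have hcard : C.ncard = k := le_antisymm hCk hkC
  refine ⟨hcard, fun C' hC'fin hC'pos hC'k => ?_⟩
  have hC'ne : C'.Nonempty := by
    rw [← Set.nonempty_iff_ne_empty] at *
    exact (Set.ncard_pos hC'fin).mp hC'pos
  set r := radius S C' with hr
  rcases hinv4 C' hC'fin hC'ne.ne_empty with hfar | hclose
  · -- all pairwise distances in C exceed 2r
    -- nearest center map f : C → C'
    choose f hfmem hfeq using fun c => distanceTo_attained hC'fin hC'ne c
    have hfr : ∀ c ∈ C, dist c (f c) ≤ r := by
      intro c hc
      rw [← hfeq c]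
      exact distanceTo_le_radius hSfin C' (hCsub hc)
    have hinj : Set.InjOn f C := by
      intro a ha b hb hab
      by_contra hne
      have h1 : dist a b ≤ dist a (f a) + dist (f b) b := by
        calc dist a b ≤ dist a (f a) + dist (f a) b := dist_triangle _ _ _
        _ = dist a (f a) + dist (f b) b := by rw [hab]
      have h2 : dist (f b) b = dist b (f b) := dist_comm _ _
      have := hfar a ha b hb hne
      have : dist a b ≤ 2 * r := by
        rw [two_mul]
        calc dist a b ≤ dist a (f a) + dist (f b) b := h1
        _ ≤ r + r := by rw [h2]; exact add_le_add (hfr a ha) (hfr b hb)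
      linarith [hfar a ha b hb hne]
    have himg : f '' C = C' := by
      apply Set.eq_of_subset_of_ncard_le
      · rintro _ ⟨c, hc, rfl⟩; exact hfmem c
      · rw [Set.ncard_image_of_injOn hinj, hcard]; exact hC'k
      · exact hC'fin
    -- now bound radius S C
    apply csSup_le ((hSne.image _))
    rintro _ ⟨s, hs, rfl⟩
    obtain ⟨c', hc', hc'eq⟩ := distanceTo_attained hC'fin hC'ne s
    have hsc' : dist s c' ≤ r := by
      rw [← hc'eq]; exact distanceTo_le_radius hSfin C' hs
    rw [← himg] at hc'
    obtain ⟨c, hc, rfl⟩ := hc'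
    calc distanceTo C s ≤ dist s c := distanceTo_le hCfin hc s
      _ ≤ dist s (f c) + dist (f c) c := dist_triangle _ _ _
      _ ≤ r + r := add_le_add hsc' (by rw [dist_comm]; exact hfr c hc)
      _ = 2 * r := (two_mul r).symm
  · apply csSup_le (hSne.image _)
    rintro _ ⟨s, hs, rfl⟩
    exact hclose s hs
end

section
/- Let S be a finite nonempty set of sites in a metric space, k > 0 with k ≤ |S|, and for a finite nonempty set C′ define radius C′ = Max {distance C′ s | s ∈ S} where distance C′ s = Min {dist s c | c ∈ C′}. Define invar C = (C ≠ ∅ ∧ |C| ≤ k ∧ C ⊆ S ∧ for every finite nonempty C′, either 2·radius C′ < dist c₁ c₂ for all distinct c₁, c₂ ∈ C, or distance C s ≤ 2·radius C′ for all s ∈ S). If invar C holds, |C| < k, and s ∈ S is a site with distance C s = Max {distance C s′ | s′ ∈ S} (a furthest site from C), then invar (C ∪ {s}) holds. -/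
theorem stmt_16 {α : Type*} [MetricSpace α] (S : Set α)
    (hSfin : S.Finite) (hSne : S.Nonempty)
    (k : ℕ) (hk : 0 < k) (hkS : k ≤ S.ncard)
    (C : Set α) (hinv : invar S k C) (hCk : C.ncard < k)
    (s : α) (hs : s ∈ S)
    (hfar : distanceTo C s = sSup ((fun s' => distanceTo C s') '' S)) :
    invar S k (C ∪ {s}) := by
  obtain ⟨hCne, hCk', hCS, hdisj⟩ := hinv
  have hCne' : C.Nonempty := Set.nonempty_iff_ne_empty.mpr hCne
  have hbdd : ∀ t : α, BddBelow ((fun c => dist t c) '' C) := by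
    intro t
    exact ⟨0, by rintro x ⟨c, _, rfl⟩; exact dist_nonneg⟩
  have hle : ∀ (t : α), ∀ c ∈ C, distanceTo C t ≤ dist t c := by
    intro t c hc
    exact csInf_le (hbdd t) ⟨c, hc, rfl⟩
  have hmono : ∀ t, distanceTo (C ∪ {s}) t ≤ distanceTo C t := by
    intro t
    apply csInf_le_csInf
    · exact ⟨0, by rintro x ⟨c, _, rfl⟩; exact dist_nonneg⟩
    · exact hCne'.image _
    · exact Set.image_mono Set.subset_union_left
  have hfarle : ∀ s' ∈ S, distanceTo C s' ≤ distanceTo C s := by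
    intro s' hs'
    rw [hfar]
    exact le_csSup ((hSfin.image _).bddAbove) ⟨s', hs', rfl⟩
  refine ⟨?_, ?_, ?_, ?_⟩
  · exact Set.nonempty_iff_ne_empty.mp (hCne'.mono Set.subset_union_left)
  · calc (C ∪ {s}).ncard = (insert s C).ncard := by rw [Set.union_singleton]
      _ ≤ C.ncard + 1 := Set.ncard_insert_le s C
      _ ≤ k := hCk
  · exact Set.union_subset hCS (by simpa using hs)
  · intro C' hC'fin hC'ne
    rcases hdisj C' hC'fin hC'ne with h1 | h2
    · by_cases hlt : 2 * radius S C' < distanceTo C s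
      · left
        intro c₁ hc₁ c₂ hc₂ hne
        rcases hc₁ with hc₁ | hc₁ <;> rcases hc₂ with hc₂ | hc₂
        · exact h1 c₁ hc₁ c₂ hc₂ hne
        · rw [Set.mem_singleton_iff] at hc₂; subst hc₂
          calc 2 * radius S C' < distanceTo C c₂ := hlt
            _ ≤ dist c₂ c₁ := hle c₂ c₁ hc₁
            _ = dist c₁ c₂ := dist_comm _ _
        · rw [Set.mem_singleton_iff] at hc₁; subst hc₁
          calc 2 * radius S C' < distanceTo C c₁ := hlt
            _ ≤ dist c₁ c₂ := hle c₁ c₂ hc₂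
        · rw [Set.mem_singleton_iff] at hc₁ hc₂
          exact absurd (hc₁.trans hc₂.symm) hne
      · right
        intro s' hs'
        have := hfarle s' hs'
        have := hmono s'
        linarith [not_lt.mp hlt]
    · right
      intro s' hs'
      exact (hmono s').trans (h2 s' hs')
end
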